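/- Let E be a finite set, w, w₁, w₂, g : E → ℝ≥0 functions, S ⊆ E, and suppose: (i) w₁(e) + w₂(e) ≥ w(e) for all e ∈ E; (ii) for i ∈ {1,2}, a maximum-weight (with respect to wᵢ) independent set Tᵢ of matroid Mᵢ = (E, Iᵢ) satisfies wᵢ(Tᵢ) = g(S). Then for any set S* independent in both M₁ and M₂, g(S) ≥ w(S*)/2. -/

import Mathlib

open Finset
open scoped Classical

structure FinMatroid (α : Type) [DecidableEq α] where
  E : Finset α
  Indep : Finset α → Prop
  indep_empty : Indep ∅
  subset_ground : ∀ ⦃X⦄, Indep X → X ⊆ E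
  indep_mono : ∀ ⦃X Y⦄, X ⊆ Y → Indep Y → Indep X
  indep_exchange : ∀ ⦃X Y⦄, Indep X → Indep Y → X.card < Y.card →
    ∃ e ∈ Y \ X, Indep (insert e X)

namespace FinMatroid

variable {α : Type} [DecidableEq α]

noncomputable def rank (M : FinMatroid α) (X : Finset α) : ℕ :=
  sSup {n | ∃ Y ⊆ X, M.Indep Y ∧ Y.card = n}

def spn (M : FinMatroid α) (X : Finset α) : Set α :=
  {e | e ∈ M.E ∧ M.rank (insert e X) = M.rank X}

end FinMatroid

theorem stmt7 {α : Type} [DecidableEq α] (M₁ M₂ : FinMatroid α) (hE : M₁.E = M₂.E)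
    (w w₁ w₂ g : α → ℝ) (hwnn : ∀ e, 0 ≤ w e) (hw₁nn : ∀ e, 0 ≤ w₁ e)
    (hw₂nn : ∀ e, 0 ≤ w₂ e) (hgnn : ∀ e, 0 ≤ g e)
    (S : Finset α)
    (hdom : ∀ e ∈ M₁.E, w e ≤ w₁ e + w₂ e)
    (T₁ T₂ : Finset α)
    (hT₁ : M₁.Indep T₁) (hT₁max : ∀ X, M₁.Indep X → ∑ e ∈ X, w₁ e ≤ ∑ e ∈ T₁, w₁ e)
    (hT₁g : ∑ e ∈ T₁, w₁ e = ∑ e ∈ S, g e)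
    (hT₂ : M₂.Indep T₂) (hT₂max : ∀ X, M₂.Indep X → ∑ e ∈ X, w₂ e ≤ ∑ e ∈ T₂, w₂ e)
    (hT₂g : ∑ e ∈ T₂, w₂ e = ∑ e ∈ S, g e)
    (Sstar : Finset α) (hS1 : M₁.Indep Sstar) (hS2 : M₂.Indep Sstar) :
    (∑ e ∈ Sstar, w e) / 2 ≤ ∑ e ∈ S, g e := by
  have h1 : ∑ e ∈ Sstar, w e ≤ ∑ e ∈ Sstar, (w₁ e + w₂ e) :=
    Finset.sum_le_sum fun e he => hdom e (M₁.subset_ground hS1 he)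
  rw [Finset.sum_add_distrib] at h1
  have h2 := hT₁max Sstar hS1
  have h3 := hT₂max Sstar hS2
  linarith
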